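/- Fix reals γ > 0, θ > 0. For a nonzero integer m set β := 2πm/θ and define Θ_m(c, c') := 4γ (4γ + iβ)^{−1} · { 1 + 2 (4γ + iβ)^{−1} [c + c' + (2γ + iβ)(iβ/2)]^{−1} ( [2(2γ + iβ)]^{−1} (c − c')² + (iβ/2)(c + c') ) }^{−1}. Then for every nonzero integer m and all reals c, c' ≥ 0, all the denominators appearing in the definition of Θ_m(c, c') are nonzero (so Θ_m(c, c') is well defined) and 1 − Θ_m(c, c') ≠ 0. -/

import Mathlib

open Real

noncomputable section

/-- The `m`-th time-Fourier symbol `Θ_m(c, c')` of the memory kernel, with `β = 2πm/θ`. -/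
def thetaM (γ θ : ℝ) (m : ℤ) (c c' : ℝ) : ℂ :=
  let β : ℂ := ((2 * π * m / θ : ℝ) : ℂ)
  (4 * (γ : ℂ)) * (4 * (γ : ℂ) + Complex.I * β)⁻¹ *
    (1 + 2 * (4 * (γ : ℂ) + Complex.I * β)⁻¹ *
        ((c : ℂ) + (c' : ℂ) + (2 * (γ : ℂ) + Complex.I * β) * (Complex.I * β / 2))⁻¹ *
        ((2 * (2 * (γ : ℂ) + Complex.I * β))⁻¹ * ((c : ℂ) - (c' : ℂ)) ^ 2
          + (Complex.I * β / 2) * ((c : ℂ) + (c' : ℂ))))⁻¹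

set_option maxHeartbeats 1000000 in
/-- For every nonzero integer `m` and all `c, c' ≥ 0`, all denominators in
the definition of `Θ_m(c, c')` are nonzero (so `Θ_m(c, c')` is well defined), and moreover
`1 − Θ_m(c, c') ≠ 0`. -/
theorem one_sub_thetaM_ne_zero (γ θ : ℝ) (hγ : 0 < γ) (hθ : 0 < θ)
    (m : ℤ) (hm : m ≠ 0) (c c' : ℝ) (hc : 0 ≤ c) (hc' : 0 ≤ c') :
    (4 * (γ : ℂ) + Complex.I * ((2 * π * m / θ : ℝ) : ℂ) ≠ 0)
    ∧ (2 * (2 * (γ : ℂ) + Complex.I * ((2 * π * m / θ : ℝ) : ℂ)) ≠ 0)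
    ∧ ((c : ℂ) + (c' : ℂ)
        + (2 * (γ : ℂ) + Complex.I * ((2 * π * m / θ : ℝ) : ℂ)) *
            (Complex.I * ((2 * π * m / θ : ℝ) : ℂ) / 2) ≠ 0)
    ∧ (1 + 2 * (4 * (γ : ℂ) + Complex.I * ((2 * π * m / θ : ℝ) : ℂ))⁻¹ *
          ((c : ℂ) + (c' : ℂ)
            + (2 * (γ : ℂ) + Complex.I * ((2 * π * m / θ : ℝ) : ℂ)) *
                (Complex.I * ((2 * π * m / θ : ℝ) : ℂ) / 2))⁻¹ *
          ((2 * (2 * (γ : ℂ) + Complex.I * ((2 * π * m / θ : ℝ) : ℂ)))⁻¹ *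
              ((c : ℂ) - (c' : ℂ)) ^ 2
            + (Complex.I * ((2 * π * m / θ : ℝ) : ℂ) / 2) * ((c : ℂ) + (c' : ℂ))) ≠ 0)
    ∧ 1 - thetaM γ θ m c c' ≠ 0 := by
  obtain ⟨b, hbdef⟩ : ∃ b : ℝ, 2 * π * (m:ℝ) / θ = b := ⟨_, rfl⟩
  rw [hbdef]
  have hb : b ≠ 0 := by
    rw [← hbdef]
    apply div_ne_zero _ hθ.ne'
    exact mul_ne_zero (mul_ne_zero two_ne_zero pi_ne_zero) (Int.cast_ne_zero.mpr hm)
  have h1 : 4 * (γ:ℂ) + Complex.I * (b:ℂ) ≠ 0 := by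
    intro h
    have := congrArg Complex.re h
    simp at this
    linarith
  have h2 : 2 * (2 * (γ:ℂ) + Complex.I * (b:ℂ)) ≠ 0 := by
    intro h
    have := congrArg Complex.re h
    simp at this
    linarith
  have h3 : (c:ℂ) + (c':ℂ) + (2*(γ:ℂ) + Complex.I * (b:ℂ)) * (Complex.I * (b:ℂ) / 2) ≠ 0 := by
    intro h
    have h' := congrArg Complex.im h
    simp at h'
    rcases h' with h' | h'
    · linarith
    · exact hb h'
  have hD : ((c:ℂ) + ↑c') * 2 + (2 * ↑γ + Complex.I * ↑b) * (Complex.I * ↑b) ≠ 0 := by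
    intro hz; apply h3; linear_combination hz / 2
  have e1 := mul_inv_cancel₀ h1
  have e2 := mul_inv_cancel₀ h2
  have e3 := mul_inv_cancel₀ h3
  have hk : (4 * (γ:ℂ) + Complex.I * (b:ℂ)) * (2 * (2 * (γ:ℂ) + Complex.I * (b:ℂ))) * ((c:ℂ) + (c':ℂ) + (2*(γ:ℂ) + Complex.I * (b:ℂ)) * (Complex.I * (b:ℂ) / 2)) *
      (1 + 2 * (4 * (γ:ℂ) + Complex.I * (b:ℂ))⁻¹ *
            ((c:ℂ) + (c':ℂ) + (2*(γ:ℂ) + Complex.I * (b:ℂ)) * (Complex.I * (b:ℂ) / 2))⁻¹ *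
            ((2 * (2 * (γ:ℂ) + Complex.I * (b:ℂ)))⁻¹ * ((c:ℂ) - (c':ℂ))^2
              + (Complex.I * (b:ℂ) / 2) * ((c:ℂ) + (c':ℂ)))) = (4 * (γ:ℂ) + Complex.I * (b:ℂ)) * (2 * (2 * (γ:ℂ) + Complex.I * (b:ℂ))) * ((c:ℂ) + (c':ℂ) + (2*(γ:ℂ) + Complex.I * (b:ℂ)) * (Complex.I * (b:ℂ) / 2)) + 2 * (((c:ℂ) - (c':ℂ))^2 + Complex.I * b * (2 * (γ:ℂ) + Complex.I * (b:ℂ)) * ((c:ℂ) + (c':ℂ))) := by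
    linear_combination 2 * ((c:ℂ) - (c':ℂ))^2 * ((2 * (2 * (γ:ℂ) + Complex.I * (b:ℂ))) * (2 * (2 * (γ:ℂ) + Complex.I * (b:ℂ)))⁻¹ * (((c:ℂ) + (c':ℂ) + (2*(γ:ℂ) + Complex.I * (b:ℂ)) * (Complex.I * (b:ℂ) / 2)) * ((c:ℂ) + (c':ℂ) + (2*(γ:ℂ) + Complex.I * (b:ℂ)) * (Complex.I * (b:ℂ) / 2))⁻¹) * e1 + (((c:ℂ) + (c':ℂ) + (2*(γ:ℂ) + Complex.I * (b:ℂ)) * (Complex.I * (b:ℂ) / 2)) * ((c:ℂ) + (c':ℂ) + (2*(γ:ℂ) + Complex.I * (b:ℂ)) * (Complex.I * (b:ℂ) / 2))⁻¹) * e2 + e3) + 2 * (2 * (2 * (γ:ℂ) + Complex.I * (b:ℂ))) * ((Complex.I * (b:ℂ) / 2) * ((c:ℂ) + (c':ℂ))) * ((((c:ℂ) + (c':ℂ) + (2*(γ:ℂ) + Complex.I * (b:ℂ)) * (Complex.I * (b:ℂ) / 2)) * ((c:ℂ) + (c':ℂ) + (2*(γ:ℂ) + Complex.I * (b:ℂ))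 * (Complex.I * (b:ℂ) / 2))⁻¹) * e1 + e3)
  have h4 : (1 + 2 * (4 * (γ:ℂ) + Complex.I * (b:ℂ))⁻¹ *
          ((c:ℂ) + (c':ℂ) + (2*(γ:ℂ) + Complex.I * (b:ℂ)) * (Complex.I * (b:ℂ) / 2))⁻¹ *
          ((2 * (2 * (γ:ℂ) + Complex.I * (b:ℂ)))⁻¹ * ((c:ℂ) - (c':ℂ))^2
            + (Complex.I * (b:ℂ) / 2) * ((c:ℂ) + (c':ℂ))) ≠ 0) := by
    intro h
    replace h : (4 * (γ:ℂ) + Complex.I * (b:ℂ)) * (2 * (2 * (γ:ℂ) + Complex.I * (b:ℂ))) * ((c:ℂ) + (c':ℂ) + (2*(γ:ℂ) + Complex.I * (b:ℂ)) * (Complex.I * (b:ℂ) / 2)) + 2 * (((c:ℂ) - (c':ℂ))^2 + Complex.I * b * (2 * (γ:ℂ) + Complex.I * (b:ℂ)) * ((c:ℂ) + (c':ℂ))) = 0 := by rw [← hk, h, mul_zero]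
    simp only [Complex.ext_iff] at h
    obtain ⟨hre, him⟩ := h
    simp at hre him
    norm_cast at hre him
    ring_nf at hre him
    have hs : 2*c + 2*c' - b^2 + 2*γ^2 = 0 := by
      have h32 : (32*γ*b) * (2*c + 2*c' - b^2 + 2*γ^2) = 0 := by linear_combination 4 * him
      exact (mul_eq_zero.mp h32).resolve_left
        (mul_ne_zero (mul_ne_zero (by norm_num) hγ.ne') hb)
    nlinarith [mul_nonneg hc hc', mul_pos hγ hγ, sq_nonneg (c+c'),
      mul_nonneg (mul_nonneg hγ.le hγ.le) (add_nonneg hc hc')]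
  refine ⟨h1, h2, h3, h4, ?_⟩
  intro h
  rw [thetaM] at h
  rw [hbdef] at h
  rw [sub_eq_zero] at h
  set E : ℂ := 1 + 2 * (4 * (γ:ℂ) + Complex.I * (b:ℂ))⁻¹ *
          ((c:ℂ) + (c':ℂ) + (2*(γ:ℂ) + Complex.I * (b:ℂ)) * (Complex.I * (b:ℂ) / 2))⁻¹ *
          ((2 * (2 * (γ:ℂ) + Complex.I * (b:ℂ)))⁻¹ * ((c:ℂ) - (c':ℂ))^2
            + (Complex.I * (b:ℂ) / 2) * ((c:ℂ) + (c':ℂ))) with hEdef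
  have hE : E = 4 * (γ:ℂ) * (4 * (γ:ℂ) + Complex.I * (b:ℂ))⁻¹ := by
    calc E = 4 * (γ:ℂ) * (4 * (γ:ℂ) + Complex.I * (b:ℂ))⁻¹ * E⁻¹ * E := by
            rw [← h, one_mul]
      _ = 4 * (γ:ℂ) * (4 * (γ:ℂ) + Complex.I * (b:ℂ))⁻¹ := inv_mul_cancel_right₀ h4 _
  rw [hEdef] at hE
  replace hE : (4 * (γ:ℂ) + Complex.I * (b:ℂ)) * (2 * (2 * (γ:ℂ) + Complex.I * (b:ℂ))) * ((c:ℂ) + (c':ℂ) + (2*(γ:ℂ) + Complex.I * (b:ℂ)) * (Complex.I * (b:ℂ) / 2)) + 2 * (((c:ℂ) - (c':ℂ))^2 + Complex.I * b * (2 * (γ:ℂ) + Complex.I * (b:ℂ)) * ((c:ℂ) + (c':ℂ))) = 4 * (γ:ℂ) * (2 * (2 * (γ:ℂ) + Complex.I * (b:ℂ))) * ((c:ℂ) + (c':ℂ) + (2*(γ:ℂ) + Complex.I * (b:ℂ)) * (Complex.I * (b:ℂ) / 2)) := by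
    rw [← hk, hEdef, hE]; linear_combination (4 * (γ:ℂ) * (2 * (2 * (γ:ℂ) + Complex.I * (b:ℂ))) * ((c:ℂ) + (c':ℂ) + (2*(γ:ℂ) + Complex.I * (b:ℂ)) * (Complex.I * (b:ℂ) / 2))) * e1
  simp only [Complex.ext_iff] at hE
  obtain ⟨hre, him⟩ := hE
  simp at hre him
  norm_cast at hre him
  ring_nf at hre him
  have hb2 : 0 < b ^ 2 := by positivity
  have hfac : (64*γ*b) * ((b^2 + 16*γ^2) * (2*(c+c') - b^2)) = 0 := by
    linear_combination 16*(b^2+16*γ^2)*him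
  have hs : 2*(c+c') - b^2 = 0 := by
    rcases mul_eq_zero.mp hfac with h' | h'
    · exact absurd h' (mul_ne_zero (mul_ne_zero (by norm_num) hγ.ne') hb)
    · rcases mul_eq_zero.mp h' with h'' | h''
      · nlinarith
      · exact h''
  nlinarith [mul_nonneg hc hc', mul_pos hγ hγ, sq_nonneg (c+c'), hb2,
    mul_pos (mul_pos hγ hγ) hb2, mul_nonneg (mul_nonneg hγ.le hγ.le) (add_nonneg hc hc'),
    sq_nonneg (c - c'), hγ.le]

end
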